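/- Let $R \ge 1$ be a real number and let $\psi : J \to \mathbb{R}_{\ge 0}$ assign to each element $b$ of a finite index set $J$ a nonnegative range, and let $x : J \to \mathbb{R}$ assign starting abscissas. For $i \in \mathbb{Z}$ say that shift $i$ is 'violated' if there exists $b \in J$ with $x(b) \notin [-i, -i+R]$ but $[x(b) - \psi(b), x(b) + \psi(b)] \cap [-i + \lceil R^{7/8} \rceil, -i + R - \lceil R^{7/8} \rceil] \ne \emptyset$. Then the number of violated shifts $i \in \mathbb{Z}$ is at most $2 \sum_{b \in J} (\psi(b) - R^{7/8} + 2)_+$. -/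
import Mathlib


open Finset

lemma aux_card_Icc (a b : ℤ) (c : ℝ) (h : (b : ℝ) + 1 - a ≤ c) :
    ((Finset.Icc a b).card : ℝ) ≤ max c 0 := by
  rw [Int.card_Icc]
  have h1 : (((b + 1 - a).toNat : ℤ) : ℝ) = max ((b : ℝ) + 1 - a) 0 := by
    rw [Int.toNat_eq_max]
    push_cast
    ring_nf
  rw [show (((b + 1 - a).toNat : ℕ) : ℝ) = (((b + 1 - a).toNat : ℤ) : ℝ) by push_cast; ring]
  rw [h1]
  exact max_le_max h le_rfl

theorem stmt0 {J : Type*} (Jf : Finset J) (ψ x : J → ℝ) (hψ : ∀ b, 0 ≤ ψ b)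
    (R : ℝ) (hR : 1 ≤ R)
    (violated : ℤ → Prop)
    (hviol : ∀ i : ℤ, violated i ↔ ∃ b ∈ Jf,
      x b ∉ Set.Icc (-(i : ℝ)) (-(i : ℝ) + R) ∧
      (Set.Icc (x b - ψ b) (x b + ψ b) ∩
        Set.Icc (-(i : ℝ) + (⌈R ^ ((7:ℝ)/8)⌉ : ℝ))
          (-(i : ℝ) + R - (⌈R ^ ((7:ℝ)/8)⌉ : ℝ))).Nonempty)
    (T : Finset ℤ) (hT : ∀ i ∈ T, violated i) :
    (T.card : ℝ) ≤ 2 * ∑ b ∈ Jf, max (ψ b - R ^ ((7:ℝ)/8) + 2) 0 := by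
  classical
  set ρ : ℝ := R ^ ((7:ℝ)/8) with hρ
  have hrge : ρ ≤ (⌈ρ⌉ : ℝ) := Int.le_ceil _
  set P : J → ℤ → Prop := fun b i =>
    x b ∉ Set.Icc (-(i : ℝ)) (-(i : ℝ) + R) ∧
      (Set.Icc (x b - ψ b) (x b + ψ b) ∩
        Set.Icc (-(i : ℝ) + (⌈ρ⌉ : ℝ)) (-(i : ℝ) + R - (⌈ρ⌉ : ℝ))).Nonempty with hP
  have hsub : T ⊆ Jf.biUnion (fun b => T.filter (fun i => P b i)) := by
    intro i hi
    obtain ⟨b, hb, h1, h2⟩ := (hviol i).1 (hT i hi)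
    exact Finset.mem_biUnion.2 ⟨b, hb, Finset.mem_filter.2 ⟨hi, h1, h2⟩⟩
  have hcard : T.card ≤ ∑ b ∈ Jf, (T.filter (fun i => P b i)).card :=
    le_trans (Finset.card_le_card hsub) Finset.card_biUnion_le
  have key : ∀ b ∈ Jf, ((T.filter (fun i => P b i)).card : ℝ)
      ≤ 2 * max (ψ b - ρ + 2) 0 := by
    intro b _
    set a1 : ℤ := ⌈(⌈ρ⌉ : ℝ) - x b - ψ b⌉
    set b1 : ℤ := ⌈-x b⌉ - 1
    set a2 : ℤ := ⌊R - x b⌋ + 1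
    set b2 : ℤ := ⌊ψ b + R - (⌈ρ⌉ : ℝ) - x b⌋
    have hsub2 : T.filter (fun i => P b i) ⊆ Finset.Icc a1 b1 ∪ Finset.Icc a2 b2 := by
      intro i hi
      obtain ⟨-, hout, y, hy1, hy2⟩ := Finset.mem_filter.1 hi
      rw [Set.mem_Icc] at hout hy1 hy2
      push_neg at hout
      rcases lt_or_ge (x b) (-(i : ℝ)) with hc | hc
      · refine Finset.mem_union_left _ (Finset.mem_Icc.2 ⟨Int.ceil_le.2 ?_, ?_⟩)
        · have : -(i : ℝ) + (⌈ρ⌉ : ℝ) ≤ x b + ψ b := le_trans hy2.1 hy1.2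
          linarith
        · have h3 : i < ⌈-x b⌉ := Int.lt_ceil.2 (by linarith)
          omega
      · refine Finset.mem_union_right _ (Finset.mem_Icc.2 ⟨?_, Int.le_floor.2 ?_⟩)
        · have hx : -(i : ℝ) + R < x b := hout hc
          have : (⌊R - x b⌋ : ℝ) < (i : ℝ) := lt_of_le_of_lt (Int.floor_le _) (by linarith)
          exact_mod_cast Int.lt_iff_add_one_le.1 (by exact_mod_cast this)
        · have : x b - ψ b ≤ -(i : ℝ) + R - (⌈ρ⌉ : ℝ) := le_trans hy1.1 hy2.2
          linarith
    have hc1 : ((Finset.Icc a1 b1).card : ℝ) ≤ max (ψ b - ρ + 2) 0 := by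
      apply aux_card_Icc
      have h1 : (b1 : ℝ) ≤ -x b := by
        have h := Int.ceil_lt_add_one (-x b)
        have e : (b1 : ℝ) = (⌈-x b⌉ : ℝ) - 1 := by simp [b1]
        linarith
      have h2 : (⌈ρ⌉ : ℝ) - x b - ψ b ≤ (a1 : ℝ) := Int.le_ceil _
      linarith
    have hc2 : ((Finset.Icc a2 b2).card : ℝ) ≤ max (ψ b - ρ + 2) 0 := by
      apply aux_card_Icc
      have h1 : (b2 : ℝ) ≤ ψ b + R - (⌈ρ⌉ : ℝ) - x b := Int.floor_le _
      have h2 : R - x b - 1 ≤ (a2 : ℝ) := by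
        have h := Int.sub_one_lt_floor (R - x b)
        have e : (a2 : ℝ) = (⌊R - x b⌋ : ℝ) + 1 := by simp [a2]
        linarith
      linarith
    calc ((T.filter (fun i => P b i)).card : ℝ)
        ≤ ((Finset.Icc a1 b1 ∪ Finset.Icc a2 b2).card : ℝ) := by
          exact_mod_cast Finset.card_le_card hsub2
      _ ≤ ((Finset.Icc a1 b1).card : ℝ) + ((Finset.Icc a2 b2).card : ℝ) := by
          exact_mod_cast Finset.card_union_le _ _
      _ ≤ 2 * max (ψ b - ρ + 2) 0 := by linarith
  calc (T.card : ℝ) ≤ ∑ b ∈ Jf, ((T.filter (fun i => P b i)).card : ℝ) := by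
        exact_mod_cast hcard
    _ ≤ ∑ b ∈ Jf, 2 * max (ψ b - ρ + 2) 0 := Finset.sum_le_sum key
    _ = 2 * ∑ b ∈ Jf, max (ψ b - ρ + 2) 0 := (Finset.mul_sum _ _ _).symm
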